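/- For system (A), the straight line c − f − (c − f)·x + 2·y = 0 is an invariant algebraic curve if and only if e = (2 + c)·(c − f)/2; moreover, when e = (2 + c)·(c − f)/2 the polynomial identity p·∂f₂/∂x + q·∂f₂/∂y = K₂·f₂ holds with f₂(x,y) = c − f − (c − f)·x + 2·y and cofactor K₂(x,y) = 2x. -/

import Mathlib

open MvPolynomial

/-- Right-hand side p of system (A). -/
noncomputable def pA (c : ℝ) : MvPolynomial (Fin 2) ℝ :=
  C c * X 0 + X 1 - C c * X 0 ^ 2

/-- Right-hand side q of system (A). -/
noncomputable def qA (c e f : ℝ) : MvPolynomial (Fin 2) ℝ :=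
  C e * X 0 + C (-1 + (e + f) / c) * X 1 - C e * X 0 ^ 2 + C 2 * X 0 * X 1

/-- The line `c - f - (c - f)x + 2y = 0`. -/
noncomputable def f2A (c f : ℝ) : MvPolynomial (Fin 2) ℝ :=
  C (c - f) - C (c - f) * X 0 + C 2 * X 1

/-- For system (A), the straight line `c - f - (c - f)x + 2y = 0` is an invariant
algebraic curve if and only if `e = (2 + c)(c - f)/2`; moreover in that case the
identity holds with cofactor `K₂ = 2x`. -/
theorem invariant_line_f2_sysA (c e f : ℝ) (hc : c ≠ 0) :
    ((∃ K : MvPolynomial (Fin 2) ℝ,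
        pA c * pderiv 0 (f2A c f) + qA c e f * pderiv 1 (f2A c f)
          = K * f2A c f) ↔ e = (2 + c) * (c - f) / 2) ∧
    (e = (2 + c) * (c - f) / 2 →
      pA c * pderiv 0 (f2A c f) + qA c e f * pderiv 1 (f2A c f)
        = (C 2 * X 0) * f2A c f) := by
  have key : e = (2 + c) * (c - f) / 2 →
      pA c * pderiv 0 (f2A c f) + qA c e f * pderiv 1 (f2A c f)
        = (C 2 * X 0) * f2A c f := by
    intro he
    apply MvPolynomial.funext
    intro x
    simp [pA, qA, f2A, pderiv_X, he]
    field_simp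
    ring
  refine ⟨⟨fun ⟨K, hK⟩ => ?_, fun he => ⟨C 2 * X 0, key he⟩⟩, key⟩
  have h0 := congrArg (eval ![(0:ℝ), -(c-f)/2]) hK
  have h2 := congrArg (eval ![(2:ℝ), (c-f)/2]) hK
  simp [pA, qA, f2A, pderiv_X] at h0 h2
  field_simp at h0 h2
  have h0' : c*(c-f)^2 + 2*c*(c-f) - 2*(c-f)*(e+f) = 0 := by linear_combination h0
  have h2' : -c*(c-f)^2 + 4*c^2*(c-f) - 8*c*e + 2*(c-f)*(e+f-c) + 8*c*(c-f) = 0 := by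
    linear_combination h2
  have h4 : 4*c*(c*(c-f) - 2*e + 2*(c-f)) = 0 := by linear_combination h2' + h0'
  have h3 : c*(c-f) - 2*e + 2*(c-f) = 0 := by
    rcases mul_eq_zero.1 h4 with h | h
    · exact absurd (by linarith : c = 0) hc
    · exact h
  linear_combination h3 * (-1/2)
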